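/- Let P be a finite poset, F, G ∈ I(P,R) elements of the incidence algebra over a commutative ring R, and f, g : P → R arbitrary functions. Define the matrix M indexed by P with entries M(a,b) = Σ_{c ∈ P} F(c,a)·f(c)·G(c,b)·g(c). Then det M = Π_{a ∈ P} F(a,a)·f(a)·G(a,a)·g(a). -/

import Mathlib

/-- For a finite poset `P`, incidence-algebra elements `F, G` over a commutative ring `R`,
and arbitrary functions `f, g : P → R`, the matrix with entries
`∑ c, F c a * f c * G c b * g c` has determinant `∏ a, F a a * f a * G a a * g a`. -/
theorem det_incidence_matrix_weighted {P : Type*} [Fintype P] [PartialOrder P] [DecidableEq P]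
    {R : Type*} [CommRing R] (F G : P → P → R) (f g : P → R)
    (hF : ∀ a b, ¬ a ≤ b → F a b = 0) (hG : ∀ a b, ¬ a ≤ b → G a b = 0) :
    Matrix.det (Matrix.of fun a b : P => ∑ c : P, F c a * f c * G c b * g c) =
      ∏ a : P, F a a * f a * G a a * g a := by
  classical
  letI : Fintype (LinearExtension P) := ‹Fintype P›
  letI : DecidableEq (LinearExtension P) := ‹DecidableEq P›
  set A : Matrix (LinearExtension P) (LinearExtension P) R :=
    Matrix.of (fun c a : P => F c a * f c) with hA
  set B : Matrix (LinearExtension P) (LinearExtension P) R :=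
    Matrix.of (fun c b : P => G c b * g c) with hB
  have hle : ∀ i j : P, ¬ toLinearExtension i ≤ toLinearExtension j → ¬ i ≤ j :=
    fun i j h hij => h (toLinearExtension.monotone hij)
  have hAtri : A.BlockTriangular id := by
    intro i j hji
    have h2 : ¬ @LE.le P _ i j := hle i j (not_le_of_gt hji)
    rw [hA]; exact mul_eq_zero_of_left (hF _ _ h2) _
  have hBtri : B.BlockTriangular id := by
    intro i j hji
    have h2 : ¬ @LE.le P _ i j := hle i j (not_le_of_gt hji)
    rw [hB]; exact mul_eq_zero_of_left (hG _ _ h2) _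
  have hM : (Matrix.of fun a b : P => ∑ c : P, F c a * f c * G c b * g c) =
      (A.transpose * B : Matrix (LinearExtension P) (LinearExtension P) R) := by
    ext a b
    simp only [Matrix.mul_apply, Matrix.transpose_apply, Matrix.of_apply, hA, hB]
    exact Finset.sum_congr rfl fun c _ => (by ring : F c a * f c * G c b * g c = F c a * f c * (G c b * g c))
  rw [hM]
  show @Matrix.det (LinearExtension P) _ _ R _ (A.transpose * B) = _
  rw [Matrix.det_mul, Matrix.det_transpose]
  show Matrix.det A * Matrix.det B = _
  rw [Matrix.det_of_upperTriangular hAtri, Matrix.det_of_upperTriangular hBtri,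
    ← Finset.prod_mul_distrib]
  exact Finset.prod_congr rfl fun a _ => by simp [hA, hB]; exact (by ring : F a a * f a * (G a a * g a) = F a a * f a * G a a * g a)
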